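/- Let A be a unital C*-algebra and X ⊆ A a closed linear subspace such that the distance from 1 to X equals 1, i.e., inf{‖x − 1‖ : x ∈ X} = 1. Then there exists a state φ on A vanishing on X: a continuous linear functional φ : A → ℂ with ‖φ‖ = 1, φ(1) = 1, φ(a) a nonnegative real for every a ≥ 0 in A, and φ(x) = 0 for all x ∈ X. -/

import Mathlib

open scoped ComplexOrder

/-- A unital norm-≤-one functional with `φ 1 = 1` on a unital C*-algebra is positive. -/
lemma aux_state_nonneg
    {A : Type*} [CStarAlgebra A] [PartialOrder A] [StarOrderedRing A]
    (φ : A →L[ℂ] ℂ) (hnorm : ‖φ‖ ≤ 1) (hone : φ 1 = 1) {a : A} (ha : 0 ≤ a) :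
    0 ≤ φ a := by
  have h10 : (1 : A) ≠ 0 := by
    intro h
    rw [h, map_zero] at hone
    exact one_ne_zero hone.symm
  haveI : Nontrivial A := nontrivial_of_ne 1 0 h10
  have hsa : IsSelfAdjoint a := .of_nonneg ha
  have hbound : ∀ b : A, ‖φ b‖ ≤ ‖b‖ := by
    intro b
    calc ‖φ b‖ = ‖φ b‖ := rfl
      _ ≤ ‖φ‖ * ‖b‖ := φ.le_opNorm b
      _ ≤ 1 * ‖b‖ := by gcongr
      _ = ‖b‖ := one_mul _
  -- imaginary part vanishes
  have him : (φ a).im = 0 := by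
    have key : ∀ t : ℝ, (φ a).re ^ 2 + ((φ a).im + t) ^ 2 ≤ ‖a‖ ^ 2 + t ^ 2 := by
      intro t
      set c : ℂ := Complex.I * t with hc
      have hstar : star (a + c • (1 : A)) = a - c • (1 : A) := by
        simp [star_smul, hsa.star_eq, hc, Complex.ext_iff, sub_eq_add_neg, ← neg_smul]
      have hmul : (a - c • (1 : A)) * (a + c • (1 : A)) = a * a + (t ^ 2 : ℂ) • (1 : A) := by
        have hc2 : c * c = -(t ^ 2 : ℂ) := by
          rw [hc, show Complex.I * (t : ℂ) * (Complex.I * (t : ℂ))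
              = Complex.I * Complex.I * ((t : ℂ) * (t : ℂ)) from by ring,
            Complex.I_mul_I]
          push_cast
          ring
        have e1 : a * (c • (1 : A)) = c • a := by rw [mul_smul_comm, mul_one]
        have e2 : (c • (1 : A)) * a = c • a := by rw [smul_mul_assoc, one_mul]
        have e3 : (c • (1 : A)) * (c • (1 : A)) = (c * c) • (1 : A) := by
          rw [smul_mul_assoc, mul_smul_comm, mul_one, smul_smul]
        have step : (a - c • (1 : A)) * (a + c • (1 : A)) = a * a - (c * c) • (1 : A) := by
          rw [sub_mul, mul_add, mul_add, e1, e2, e3]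
          abel
        rw [step, hc2, neg_smul, sub_neg_eq_add]
      have hnormb : ‖a + c • (1 : A)‖ ^ 2 ≤ ‖a‖ ^ 2 + t ^ 2 := by
        have := CStarRing.norm_star_mul_self (x := a + c • (1 : A))
        rw [hstar, hmul] at this
        calc ‖a + c • (1 : A)‖ ^ 2 = ‖a + c • (1 : A)‖ * ‖a + c • (1 : A)‖ := sq _
          _ = ‖a * a + (t ^ 2 : ℂ) • (1 : A)‖ := this.symm
          _ ≤ ‖a * a‖ + ‖(t ^ 2 : ℂ) • (1 : A)‖ := norm_add_le _ _
          _ ≤ ‖a‖ * ‖a‖ + ‖(t ^ 2 : ℂ)‖ * ‖(1 : A)‖ := by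
              gcongr
              · exact norm_mul_le a a
              · exact norm_smul_le _ _
          _ = ‖a‖ ^ 2 + t ^ 2 := by
              rw [norm_one, mul_one, ← sq]
              congr 1
              rw [show ((t : ℝ) ^ 2 : ℂ) = ((t : ℂ)) ^ 2 by push_cast; ring,
                norm_pow, Complex.norm_real, Real.norm_eq_abs, sq_abs]
      have hphib : φ (a + c • (1 : A)) = φ a + c := by
        rw [map_add, map_smul, hone, smul_eq_mul, mul_one]
      have h1 : ‖φ a + c‖ ≤ ‖a + c • (1 : A)‖ := hphib ▸ hbound _
      have h2 : ‖φ a + c‖ ^ 2 = (φ a).re ^ 2 + ((φ a).im + t) ^ 2 := by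
        rw [Complex.sq_norm, Complex.normSq_apply]
        simp [hc, sq]
      have h3 : ‖φ a + c‖ ^ 2 ≤ ‖a + c • (1 : A)‖ ^ 2 := by
        have := norm_nonneg (φ a + c)
        nlinarith
      have h4 := h3.trans hnormb
      rw [h2] at h4
      linarith
    by_contra him
    set im := (φ a).im with him'
    set re := (φ a).re with hre'
    have := key ((‖a‖ ^ 2 + 1 - re ^ 2 - im ^ 2) / (2 * im))
    have h2im : (2 : ℝ) * im ≠ 0 := by
      intro h; exact him (by linarith)
    nlinarith [sq_nonneg re, sq_nonneg im, mul_self_nonneg (2 * im),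
      mul_div_cancel₀ (‖a‖ ^ 2 + 1 - re ^ 2 - im ^ 2) h2im, sq_nonneg (im + (‖a‖ ^ 2 + 1 - re ^ 2 - im ^ 2) / (2 * im))]
  -- real part nonneg
  have hre : 0 ≤ (φ a).re := by
    set r : ℝ := ‖a‖ with hr
    have hr0 : (0 : ℝ) ≤ r := norm_nonneg a
    have hle : a ≤ algebraMap ℝ A r :=
      (CStarAlgebra.norm_le_iff_le_algebraMap a hr0 ha).mp le_rfl
    have hb0 : 0 ≤ algebraMap ℝ A r - a := sub_nonneg.mpr hle
    have hble : algebraMap ℝ A r - a ≤ algebraMap ℝ A r := by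
      simpa using sub_le_self (algebraMap ℝ A r) ha
    have hbn : ‖algebraMap ℝ A r - a‖ ≤ r :=
      (CStarAlgebra.norm_le_iff_le_algebraMap _ hr0 hb0).mpr hble
    have halg : φ (algebraMap ℝ A r) = (r : ℂ) := by
      have : algebraMap ℝ A r = (r : ℂ) • (1 : A) := by
        rw [Algebra.algebraMap_eq_smul_one]
        norm_num [Complex.coe_smul]
      rw [this, map_smul, hone, smul_eq_mul, mul_one]
    have harg : (r : ℂ) - φ a = φ (algebraMap ℝ A r - a) := by
      rw [map_sub, halg]
    have h1 : ‖(r : ℂ) - φ a‖ ≤ r := by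
      rw [harg]
      exact (hbound _).trans hbn
    have h2 : ‖(r : ℂ) - φ a‖ ^ 2 = (r - (φ a).re) ^ 2 + (φ a).im ^ 2 := by
      rw [Complex.sq_norm, Complex.normSq_apply]
      simp [sq]
    rw [him] at h2
    have habs := norm_nonneg ((r : ℂ) - φ a)
    nlinarith [sq_nonneg ((φ a).re), sq_nonneg (r - (φ a).re), h1, h2, habs, hr0]
  rw [Complex.le_def]
  simpa using ⟨hre, him.symm⟩

/-- If `X` is a closed subspace of a unital C*-algebra `A` at distance exactly
`1` from the identity, then there is a state `φ` on `A` (a positive continuous linear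
functional of norm `1` with `φ(1) = 1`) vanishing on `X`. -/
theorem exists_state_annihilating_of_infDist_eq_one
    {A : Type*} [CStarAlgebra A] [PartialOrder A] [StarOrderedRing A]
    (X : Submodule ℂ A) (hXclosed : IsClosed (X : Set A))
    (hdist : Metric.infDist (1 : A) (X : Set A) = 1) :
    ∃ φ : A →L[ℂ] ℂ, ‖φ‖ = 1 ∧ φ 1 = 1 ∧ (∀ a : A, 0 ≤ a → 0 ≤ φ a) ∧
      ∀ x ∈ X, φ x = 0 := by
  haveI := hXclosed
  have h10 : (1 : A) ≠ 0 := by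
    intro h
    rw [h, Metric.infDist_zero_of_mem X.zero_mem] at hdist
    exact zero_ne_one hdist
  haveI : Nontrivial A := nontrivial_of_ne 1 0 h10
  -- norm of the class of 1 in the quotient is 1
  have hXne : (X : Set A).Nonempty := ⟨0, X.zero_mem⟩
  have hmk : ‖(Submodule.Quotient.mk (1 : A) : A ⧸ X)‖ = 1 := by
    apply le_antisymm
    · rw [← hdist, ← not_lt]
      intro hlt
      obtain ⟨y, hy, hdy⟩ := (Metric.infDist_lt_iff hXne).mp hlt
      have heq : (Submodule.Quotient.mk (1 : A) : A ⧸ X) = Submodule.Quotient.mk (1 - y) := by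
        rw [Submodule.Quotient.mk_sub, (Submodule.Quotient.mk_eq_zero X).mpr hy, sub_zero]
      have : ‖(Submodule.Quotient.mk (1 : A) : A ⧸ X)‖ ≤ dist (1 : A) y := by
        rw [heq, dist_eq_norm]
        exact Submodule.Quotient.norm_mk_le X (1 - y)
      linarith
    · rw [← hdist, ← not_lt]
      intro hlt
      obtain ⟨m, hm, hmlt⟩ := Submodule.Quotient.norm_mk_lt
        (Submodule.Quotient.mk (1 : A) : A ⧸ X)
        (sub_pos.mpr hlt : 0 < Metric.infDist (1 : A) (X : Set A) - ‖(Submodule.Quotient.mk (1 : A) : A ⧸ X)‖)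
      have hx : (1 : A) - m ∈ X := by
        have := (Submodule.Quotient.eq X).mp hm
        simpa [neg_sub] using X.neg_mem this
      have : Metric.infDist (1 : A) (X : Set A) ≤ ‖m‖ := by
        have h := Metric.infDist_le_dist_of_mem (x := (1 : A)) hx
        rwa [dist_eq_norm, sub_sub_cancel] at h
      linarith
  have hmkne : (Submodule.Quotient.mk (1 : A) : A ⧸ X) ≠ 0 := by
    intro h
    rw [h, norm_zero] at hmk
    exact zero_ne_one hmk
  obtain ⟨g, hg1, hg2⟩ := exists_dual_vector ℂ _ (by rw [hmk]; exact one_ne_zero)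
  -- continuous quotient map
  let π : A →L[ℂ] A ⧸ X :=
    LinearMap.mkContinuous X.mkQ 1 (fun x => by
      simpa using Submodule.Quotient.norm_mk_le X x)
  have hπ : ∀ a : A, π a = Submodule.Quotient.mk a := fun a => rfl
  refine ⟨g.comp π, ?_, ?_, ?_, ?_⟩
  case _ => -- prove norm later; reorder: first compute φ 1
    apply le_antisymm
    · apply ContinuousLinearMap.opNorm_le_bound _ zero_le_one
      intro a
      calc ‖g (π a)‖ ≤ ‖g‖ * ‖π a‖ := g.le_opNorm _
        _ = ‖π a‖ := by rw [hg1, one_mul]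
        _ ≤ ‖a‖ := by rw [hπ]; exact Submodule.Quotient.norm_mk_le X a
        _ = 1 * ‖a‖ := (one_mul _).symm
    · have h1 : ‖(g.comp π) 1‖ = 1 := by
        simp only [ContinuousLinearMap.comp_apply, hπ, hg2, hmk]
        norm_num
      have := (g.comp π).le_opNorm 1
      rw [h1, norm_one, mul_one] at this
      exact this
  case _ =>
    simp only [ContinuousLinearMap.comp_apply, hπ, hg2, hmk]
    norm_num
  case _ =>
    intro a ha
    have hφnorm : ‖g.comp π‖ ≤ 1 := by
      apply ContinuousLinearMap.opNorm_le_bound _ zero_le_one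
      intro a
      calc ‖g (π a)‖ ≤ ‖g‖ * ‖π a‖ := g.le_opNorm _
        _ = ‖π a‖ := by rw [hg1, one_mul]
        _ ≤ ‖a‖ := by rw [hπ]; exact Submodule.Quotient.norm_mk_le X a
        _ = 1 * ‖a‖ := (one_mul _).symm
    have hφone : (g.comp π) 1 = 1 := by
      simp only [ContinuousLinearMap.comp_apply, hπ, hg2, hmk]
      norm_num
    exact aux_state_nonneg (g.comp π) hφnorm hφone ha
  case _ =>
    intro x hx
    simp only [ContinuousLinearMap.comp_apply, hπ]
    rw [(Submodule.Quotient.mk_eq_zero X).mpr hx, map_zero]
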